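/- Let σ ∈ {0,1}^{ℤ²} be a configuration, Δ ⊂ ℤ² a finite set, and C a mixed circuit around Δ with respect to σ. Let x, y be sites in the exterior of C. If there exists a 1*path from x to y with respect to σ, then there exists a 1*path from x to y with respect to σ that avoids Δ. -/

import Mathlib

open MeasureTheory ProbabilityTheory
open scoped ENNReal

namespace Percolation

/-- Sites of the square lattice. -/
abbrev Site : Type := ℤ × ℤ

/-- Configurations: spins `0`/`1` encoded as `false`/`true`. -/
abbrev Config : Type := Site → Bool

/-- Nearest-neighbour adjacency: Euclidean distance `1`. -/
def adj (x y : Site) : Prop :=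
  (x.1 - y.1) ^ 2 + (x.2 - y.2) ^ 2 = 1

/-- `*`adjacency: Euclidean distance `1` or `√2`. -/
def adjStar (x y : Site) : Prop :=
  x ≠ y ∧ |x.1 - y.1| ≤ 1 ∧ |x.2 - y.2| ≤ 1

/-- `x` and `y` are joined inside `G` by a path whose consecutive sites satisfy `R`. -/
def JoinedIn (R : Site → Site → Prop) (G : Set Site) (x y : Site) : Prop :=
  ∃ P : List Site, P.Chain' R ∧ (∀ z ∈ P, z ∈ G) ∧ P.head? = some x ∧ P.getLast? = some y

/-- `S` is a `0`cluster of `σ`: a maximal `adj`-connected subset of `σ⁻¹(0)`. -/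
def IsCluster0 (σ : Config) (S : Set Site) : Prop :=
  S.Nonempty ∧ (∀ z ∈ S, σ z = false) ∧
    (∀ x ∈ S, ∀ y ∈ S, JoinedIn adj S x y) ∧
    (∀ x ∈ S, ∀ y : Site, adj x y → σ y = false → y ∈ S)

/-- `S` is a `1*`cluster of `σ`: a maximal `adjStar`-connected subset of `σ⁻¹(1)`. -/
def IsCluster1 (σ : Config) (S : Set Site) : Prop :=
  S.Nonempty ∧ (∀ z ∈ S, σ z = true) ∧
    (∀ x ∈ S, ∀ y ∈ S, JoinedIn adjStar S x y) ∧
    (∀ x ∈ S, ∀ y : Site, adjStar x y → σ y = true → y ∈ S)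

/-- `x` belongs to an infinite `1*`cluster of `σ`. -/
def InInfinite1 (σ : Config) (x : Site) : Prop :=
  ∃ S : Set Site, IsCluster1 σ S ∧ S.Infinite ∧ x ∈ S

/-- There is exactly one infinite `0`cluster. -/
def UniqueInfinite0 (σ : Config) : Prop :=
  ∃! S : Set Site, IsCluster0 σ S ∧ S.Infinite

/-- There is exactly one infinite `1*`cluster. -/
def UniqueInfinite1 (σ : Config) : Prop :=
  ∃! S : Set Site, IsCluster1 σ S ∧ S.Infinite

/-- There is at most one infinite `1*`cluster. -/
def AtMostOneInfinite1 (σ : Config) : Prop :=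
  ∀ S T : Set Site, IsCluster1 σ S → S.Infinite → IsCluster1 σ T → T.Infinite → S = T

/-- An infinite `1*`cluster exists. -/
def ExistsInfinite1 (σ : Config) : Prop := ∃ S : Set Site, IsCluster1 σ S ∧ S.Infinite

/-- An infinite `0`cluster exists. -/
def ExistsInfinite0 (σ : Config) : Prop := ∃ S : Set Site, IsCluster0 σ S ∧ S.Infinite

/-- An increasing event. -/
def IncreasingEvent (A : Set Config) : Prop :=
  ∀ ⦃ξ η : Config⦄, ξ ∈ A → ξ ≤ η → η ∈ A

/-- Positive association: increasing events are positively correlated. -/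
def PositivelyAssociated (μ : Measure Config) : Prop :=
  ∀ A B : Set Config, MeasurableSet A → MeasurableSet B →
    IncreasingEvent A → IncreasingEvent B → μ A * μ B ≤ μ (A ∩ B)

/-- The cylinder event "`η` on `Δ`". -/
def cylEvent (Δ : Finset Site) (η : Site → Bool) : Set Config :=
  {σ | ∀ z ∈ Δ, σ z = η z}

/-- The σ-algebra generated by the spins outside `Δ`. -/
def outsideAlgebra (Δ : Finset Site) : MeasurableSpace Config :=
  MeasurableSpace.comap (fun σ (z : {z : Site // z ∉ Δ}) => σ z.1) inferInstance

/-- The bounded energy condition: `μ(η on Δ | ξ off Δ) ≥ c_{|Δ|}` for a.e. `ξ`, expressed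
via integrated conditional probabilities against events of the outside σ-algebra. -/
def BoundedEnergy (μ : Measure Config) : Prop :=
  ∀ n : ℕ, ∃ c : ℝ≥0∞, 0 < c ∧
    ∀ Δ : Finset Site, Δ.card = n → ∀ η : Site → Bool,
      ∀ B : Set Config, MeasurableSet[outsideAlgebra Δ] B →
        c * μ B ≤ μ (cylEvent Δ η ∩ B)

/-- The finite energy condition: `μ(η on Δ | ξ off Δ) > 0` for a.e. `ξ`, expressed
via integrated conditional probabilities against events of the outside σ-algebra. -/
def FiniteEnergy (μ : Measure Config) : Prop :=
  ∀ (Δ : Finset Site) (η : Site → Bool) (B : Set Config),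
    MeasurableSet[outsideAlgebra Δ] B → 0 < μ B → 0 < μ (cylEvent Δ η ∩ B)

/-- The tail σ-algebra. -/
def tailAlgebra : MeasurableSpace Config :=
  ⨅ Δ : Finset Site, outsideAlgebra Δ

/-- Translation of configurations by `v`. -/
def shift (v : Site) (σ : Config) : Config := fun z => σ (z + v)

/-- A site viewed as a complex number. -/
noncomputable def toC (z : Site) : ℂ := (z.1 : ℂ) + (z.2 : ℂ) * Complex.I

/-- Winding number around the origin of the polygonal curve through the sites of `P`. -/
noncomputable def winding (P : List Site) : ℝ :=
  (1 / (2 * Real.pi)) *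
    ((P.zip P.tail).map fun p => Complex.arg (toC p.2 / toC p.1)).sum

/-- Winding number of `P` around the site `w`. -/
noncomputable def windingAround (P : List Site) (w : Site) : ℝ :=
  winding (P.map fun z => z - w)

/-- The site `w` lies in the interior of the circuit `C`, i.e. is enclosed by `C`. -/
def circuitEncloses (C : List Site) (w : Site) : Prop :=
  w ∉ C ∧ windingAround (C ++ C.take 1) w ≠ 0

/-- A circuit: a path whose starting site is adjacent to its ending site. -/
def IsCircuit (C : List Site) : Prop :=
  C.Chain' adj ∧ ∃ h : C ≠ [], adj (C.getLast h) (C.head h)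

/-- A `*`circuit: a `*`path whose starting site is `*`adjacent to its ending site. -/
def IsStarCircuit (C : List Site) : Prop :=
  C.Chain' adjStar ∧ ∃ h : C ≠ [], adjStar (C.getLast h) (C.head h)

/-- A (finite) `1*`path with respect to `σ`. -/
def Is1StarPath (σ : Config) (P : List Site) : Prop :=
  P ≠ [] ∧ P.Chain' adjStar ∧ ∀ z ∈ P, σ z = true

/-- A (finite) `0`path with respect to `σ`. -/
def Is0Path (σ : Config) (P : List Site) : Prop :=
  P ≠ [] ∧ P.Chain' adj ∧ ∀ z ∈ P, σ z = false

/-- A `1*`circuit with respect to `σ`. -/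
def Is1StarCircuit (σ : Config) (C : List Site) : Prop :=
  IsStarCircuit C ∧ ∀ z ∈ C, σ z = true

/-- A `0`circuit with respect to `σ`. -/
def Is0Circuit (σ : Config) (C : List Site) : Prop :=
  IsCircuit C ∧ ∀ z ∈ C, σ z = false

/-- `C` is a circuit around `Δ`: every site of `Δ` is enclosed by `C`. -/
def CircuitAround (C : List Site) (Δ : Set Site) : Prop :=
  ∀ z ∈ Δ, circuitEncloses C z

/-- A mixed circuit with respect to `σ`: a self-avoiding `*`circuit consisting of a
self-avoiding `1*`path followed by a self-avoiding `0`path (either part may be empty). -/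
def IsMixedCircuit (σ : Config) (C : List Site) : Prop :=
  ∃ P Q : List Site, C = P ++ Q ∧ C.Nodup ∧
    P.Chain' adjStar ∧ Q.Chain' adj ∧
    (∀ z ∈ P, σ z = true) ∧ (∀ z ∈ Q, σ z = false) ∧ IsStarCircuit C

/-- `z` lies in the exterior of the circuit `C`. -/
def InExterior (C : List Site) (z : Site) : Prop :=
  z ∉ C ∧ ¬ circuitEncloses C z

/-- An infinite self-avoiding `1*`path with respect to `σ`. -/
def IsInfSA1StarPath (σ : Config) (f : ℕ → Site) : Prop :=
  Function.Injective f ∧ (∀ i, adjStar (f i) (f (i + 1))) ∧ ∀ i, σ (f i) = true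

/-- An infinite self-avoiding `0`path with respect to `σ`. -/
def IsInfSA0Path (σ : Config) (f : ℕ → Site) : Prop :=
  Function.Injective f ∧ (∀ i, adj (f i) (f (i + 1))) ∧ ∀ i, σ (f i) = false

/-- There exist `n` pairwise disjoint infinite self-avoiding `1*`paths. -/
def HasNDisjoint1 (σ : Config) (n : ℕ) : Prop :=
  ∃ f : Fin n → ℕ → Site, (∀ i, IsInfSA1StarPath σ (f i)) ∧
    ∀ i j, i ≠ j → Disjoint (Set.range (f i)) (Set.range (f j))

/-- A two-sided infinite self-avoiding `1*`path with respect to `σ`. -/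
def IsTwoSidedInf1 (σ : Config) (f : ℤ → Site) : Prop :=
  Function.Injective f ∧ (∀ i : ℤ, adjStar (f i) (f (i + 1))) ∧ ∀ i : ℤ, σ (f i) = true

/-- A `1*`path of `σ` from `x` to `y` avoiding `Δ`. -/
def starPathBetweenAvoiding (σ : Config) (Δ : Set Site) (x y : Site) (P : List Site) : Prop :=
  Is1StarPath σ P ∧ P.head? = some x ∧ P.getLast? = some y ∧ ∀ z ∈ P, z ∉ Δ

/-- `x` is on the left side of `Γ`. -/
def OnLeftSide (x : Site) (Γ : Set Site) : Prop :=
  ∃ d : ℕ, 0 < d ∧ (∀ z ∈ Γ, |z.1| ≤ (d : ℤ) ∧ |z.2| ≤ (d : ℤ)) ∧ x.1 ≤ -(d : ℤ)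

/-- `x` is on the right side of `Γ`. -/
def OnRightSide (x : Site) (Γ : Set Site) : Prop :=
  ∃ d : ℕ, 0 < d ∧ (∀ z ∈ Γ, |z.1| ≤ (d : ℤ) ∧ |z.2| ≤ (d : ℤ)) ∧ (d : ℤ) ≤ x.1

/-- The square `{-n, …, n}²`. -/
def square (n : ℕ) : Set Site := {z : Site | |z.1| ≤ (n : ℤ) ∧ |z.2| ≤ (n : ℤ)}

/-- The `*`boundary `∂*B` of a set of sites. -/
def starBoundary (B : Set Site) : Set Site :=
  {x | x ∉ B ∧ ∃ y ∈ B, adjStar x y}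

/-- The union of all infinite `1*`clusters of `σ`. -/
def InfinitePart1 (σ : Config) : Set Site := {z | InInfinite1 σ z}

/-- The filled infinite `1*`cluster `S₁*`: the infinite `1*`cluster together with all
finite `0`clusters `*`encircled by it. -/
def Fill (σ : Config) : Set Site :=
  InfinitePart1 σ ∪
    {z | ∃ F : Set Site, IsCluster0 σ F ∧ F.Finite ∧ z ∈ F ∧
      ∃ C : List Site, IsStarCircuit C ∧ (∀ w ∈ C, w ∈ InfinitePart1 σ) ∧
        ∀ w ∈ F, circuitEncloses C w}

/-- The indicator of the filled infinite `1*`cluster, as a point of `{0,1}^{ℤ²}`. -/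
noncomputable def fillInd (σ : Config) : Site → Bool :=
  fun z => @decide (z ∈ Fill σ) (Classical.propDecidable _)

/-- Exactly one infinite `0`cluster and exactly one infinite `1*`cluster coexist. -/
def CoexistUnique (σ : Config) : Prop := UniqueInfinite0 σ ∧ UniqueInfinite1 σ


lemma adjStar_symm {a b : Site} (h : adjStar a b) : adjStar b a := by
  obtain ⟨h1, h2, h3⟩ := h
  exact ⟨h1.symm, by rw [abs_sub_comm]; exact h2, by rw [abs_sub_comm]; exact h3⟩

lemma toC_re (z : Site) : (toC z).re = (z.1 : ℝ) := by simp [toC]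
lemma toC_im (z : Site) : (toC z).im = (z.2 : ℝ) := by simp [toC]

lemma toC_inj {a b : Site} (h : toC a = toC b) : a = b := by
  have h1 := congrArg Complex.re h
  have h2 := congrArg Complex.im h
  rw [toC_re, toC_re] at h1
  rw [toC_im, toC_im] at h2
  exact Prod.ext (by exact_mod_cast h1) (by exact_mod_cast h2)

lemma toC_sub (a b : Site) : toC (a - b) = toC a - toC b := by
  simp only [toC, Prod.fst_sub, Prod.snd_sub]
  push_cast
  ring

/-- The sum of argument increments of the polygon `L` as seen from `w`. -/
noncomputable def argSum (L : List Site) (w : ℂ) : ℝ :=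
  ((L.zip L.tail).map fun p => Complex.arg ((toC p.2 - w) / (toC p.1 - w))).sum

lemma windingAround_eq (L : List Site) (z : Site) :
    windingAround L z = (1 / (2 * Real.pi)) * argSum L (toC z) := by
  unfold windingAround winding argSum
  congr 1
  have htail : (L.map fun w => w - z).tail = L.tail.map fun w => w - z := by
    rw [List.map_tail]
  rw [htail, List.zip_map, List.map_map]
  congr 1
  refine List.map_congr_left fun p _ => ?_
  simp only [Function.comp, Prod.map]
  rw [toC_sub, toC_sub]

lemma mem_zip_tail {L : List Site} {p : Site × Site} :
    p ∈ L.zip L.tail ↔ ∃ (i : ℕ) (h : i + 1 < L.length), L[i] = p.1 ∧ L[i+1] = p.2 := by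
  rw [List.mem_iff_getElem]
  constructor
  · rintro ⟨i, hi, hget⟩
    rw [List.length_zip, List.length_tail] at hi
    have hi1 : i + 1 < L.length := by omega
    refine ⟨i, hi1, ?_, ?_⟩
    · rw [List.getElem_zip] at hget
      rw [← hget]
    · rw [List.getElem_zip] at hget
      rw [← hget]
      simp [List.getElem_tail]
  · rintro ⟨i, hi, h1, h2⟩
    refine ⟨i, ?_, ?_⟩
    · rw [List.length_zip, List.length_tail]; omega
    · rw [List.getElem_zip, List.getElem_tail, h1, h2]

/-- Every member of a closed list is the first component of some consecutive pair. -/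
lemma mem_fst_zip_tail {L : List Site} (hne : L ≠ []) (h2 : L.tail ≠ [])
    (hclosed : L.getLast hne = L.head hne) {z : Site} (hz : z ∈ L) :
    ∃ p ∈ L.zip L.tail, p.1 = z := by
  obtain ⟨i, hi, rfl⟩ := List.mem_iff_getElem.mp hz
  have hlen : 2 ≤ L.length := by
    have := List.length_tail (l := L)
    have h1 : 0 < L.length := List.length_pos_iff.mpr hne
    have h2' : 0 < L.tail.length := List.length_pos_iff.mpr h2
    omega
  by_cases hil : i + 1 < L.length
  · exact ⟨(L[i], L[i+1]), mem_zip_tail.mpr ⟨i, hil, rfl, rfl⟩, rfl⟩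
  · have hieq : i = L.length - 1 := by omega
    have : L[i] = L.getLast hne := by
      rw [List.getLast_eq_getElem]
      congr 1
    rw [this, hclosed]
    refine ⟨(L[0], L[1]), mem_zip_tail.mpr ⟨0, by omega, rfl, rfl⟩, ?_⟩
    rw [← List.head_eq_getElem]

/-- Telescoping product along consecutive pairs. -/
lemma tele_prod (f : Site → ℂ) :
    ∀ (L : List Site) (hne : L ≠ []), (∀ z ∈ L, f z ≠ 0) →
      ((L.zip L.tail).map fun p => f p.2 / f p.1).prod = f (L.getLast hne) / f (L.head hne)
  | [], hne, _ => absurd rfl hne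
  | [a], _, hf => by
      simp [div_self (hf a (by simp))]
  | a :: b :: t, _, hf => by
      have ih := tele_prod f (b :: t) (by simp) (fun z hz => hf z (List.mem_cons_of_mem a hz))
      have : ((a :: b :: t).zip (a :: b :: t).tail) = (a, b) :: ((b :: t).zip (b :: t).tail) := by
        simp
      rw [this, List.map_cons, List.prod_cons, ih]
      have hfa : f a ≠ 0 := hf a (by simp)
      have hfb : f b ≠ 0 := hf b (by simp)
      have hfl : f ((b :: t).getLast (by simp)) ≠ 0 := by
        apply hf
        exact List.mem_cons_of_mem a (List.getLast_mem _)
      rw [List.getLast_cons (by simp : (b :: t) ≠ [])]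
      rw [List.head_cons, List.head_cons]
      field_simp

lemma exp_arg_list (l : List ℂ) (h : ∀ q ∈ l, q ≠ 0) :
    Complex.exp (((l.map Complex.arg).sum : ℝ) * Complex.I) =
      (l.map fun (q : ℂ) => q / (‖q‖ : ℝ)).prod := by
  induction l with
  | nil => simp
  | cons a t ih =>
      have ha : a ≠ 0 := h a (by simp)
      have ih' := ih (fun q hq => h q (List.mem_cons_of_mem a hq))
      simp only [List.map_cons, List.sum_cons, List.prod_cons]
      rw [Complex.ofReal_add, add_mul, Complex.exp_add, ih']
      congr 1
      have := Complex.norm_mul_exp_arg_mul_I a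
      have habs : ((‖a‖ : ℝ) : ℂ) ≠ 0 := by
        simp [ha]
      field_simp
      linear_combination this

/-- The argument sum around a closed polygon is an integer multiple of `2π`. -/
lemma argSum_int (L : List Site) (hne : L ≠ []) (hclosed : L.getLast hne = L.head hne)
    (w : ℂ) (hw : ∀ z ∈ L, toC z ≠ w) :
    ∃ n : ℤ, argSum L w = n * (2 * Real.pi) := by
  set l : List ℂ := (L.zip L.tail).map fun p => (toC p.2 - w) / (toC p.1 - w) with hl
  have hmem : ∀ q ∈ l, q ≠ 0 := by
    intro q hq
    rw [hl, List.mem_map] at hq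
    obtain ⟨p, hp, rfl⟩ := hq
    have h1 : p.1 ∈ L := (List.of_mem_zip hp).1
    have h2 : p.2 ∈ L := List.mem_of_mem_tail (List.of_mem_zip hp).2
    exact div_ne_zero (sub_ne_zero.mpr (hw _ h2)) (sub_ne_zero.mpr (hw _ h1))
  have hprod : l.prod = 1 := by
    have h0 : ∀ z ∈ L, (fun z => toC z - w) z ≠ 0 := fun z hz => sub_ne_zero.mpr (hw z hz)
    have := tele_prod (fun z => toC z - w) L hne h0
    rw [hl]
    rw [this, hclosed, div_self (h0 _ (List.head_mem hne))]
  have hexp : Complex.exp ((argSum L w : ℝ) * Complex.I) = 1 := by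
    have : argSum L w = (l.map Complex.arg).sum := by
      rw [hl, List.map_map]
      rfl
    rw [this, exp_arg_list l hmem]
    have : (l.map fun (q : ℂ) => q / (‖q‖ : ℝ)).prod
        = l.prod / ((l.map fun q => ((‖q‖ : ℝ) : ℂ)).prod) := by
      induction l with
      | nil => simp
      | cons a t ih2 => simp only [List.map_cons, List.prod_cons, ih2]; field_simp
    have habs : (l.map fun q => ((‖q‖ : ℝ) : ℂ)).prod = ((‖l.prod‖ : ℝ) : ℂ) := by
      clear this hmem hprod
      induction l with
      | nil => simp
      | cons a t ih3 =>
          simp only [List.map_cons, List.prod_cons, ih3, norm_mul]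
          push_cast
          ring
    rw [this, hprod, habs, hprod]
    simp
  rw [Complex.exp_eq_one_iff] at hexp
  obtain ⟨n, hn⟩ := hexp
  refine ⟨n, ?_⟩
  have hI : (Complex.I : ℂ) ≠ 0 := Complex.I_ne_zero
  have h2 : ((argSum L w : ℝ) : ℂ) * Complex.I = ((n : ℂ) * (2 * (Real.pi : ℂ))) * Complex.I := by
    rw [hn]; push_cast; ring
  have h3 := mul_right_cancel₀ hI h2
  exact_mod_cast h3

lemma argSum_const (L : List Site) (hne : L ≠ []) (hclosed : L.getLast hne = L.head hne)
    (u v : ℂ)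
    (hdisj : ∀ p ∈ L.zip L.tail, ∀ z ∈ segment ℝ (toC p.1) (toC p.2), z ∉ segment ℝ u v) :
    argSum L u = argSum L v := by
  by_cases hz : L.zip L.tail = []
  · unfold argSum; rw [hz]; simp
  have htne : L.tail ≠ [] := by
    intro h
    apply hz
    rw [h, List.zip_nil_right]
  set w : ℝ → ℂ := fun t => u + (t : ℂ) * (v - u) with hw
  have hseg : ∀ t ∈ Set.Icc (0:ℝ) 1, w t ∈ segment ℝ u v := by
    intro t ht
    rw [segment_eq_image']
    exact ⟨t, ht, by simp [hw, Complex.real_smul]⟩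
  have hwcont : Continuous w := by
    apply Continuous.add continuous_const
    exact (Complex.continuous_ofReal).mul continuous_const
  set g : ℝ → ℝ := fun t => argSum L (w t) with hg
  have hg_cont : ContinuousOn g (Set.Icc 0 1) := by
    have main : ∀ l : List (Site × Site), (∀ p ∈ l, p ∈ L.zip L.tail) →
        ContinuousOn
          (fun t => (l.map fun p => Complex.arg ((toC p.2 - w t) / (toC p.1 - w t))).sum)
          (Set.Icc (0:ℝ) 1) := by
      intro l hl
      induction l with
      | nil => simpa using continuousOn_const
      | cons p l ih =>
          simp only [List.map_cons, List.sum_cons]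
          refine ContinuousOn.add ?_ (ih fun q hq => hl q (List.mem_cons_of_mem p hq))
          intro t ht
          have hp := hl p List.mem_cons_self
          have hwt : w t ∈ segment ℝ u v := hseg t ht
          have hnotin : w t ∉ segment ℝ (toC p.1) (toC p.2) := fun h => hdisj p hp _ h hwt
          have hd : toC p.1 - w t ≠ 0 := by
            rw [sub_ne_zero]
            intro h
            exact hnotin (h ▸ left_mem_segment ℝ _ _)
          have hqc : ContinuousAt (fun s => (toC p.2 - w s) / (toC p.1 - w s)) t := by
            apply ContinuousAt.div
            · exact (continuous_const.sub hwcont).continuousAt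
            · exact (continuous_const.sub hwcont).continuousAt
            · exact hd
          have hslit : 0 < ((toC p.2 - w t) / (toC p.1 - w t)).re ∨
              ((toC p.2 - w t) / (toC p.1 - w t)).im ≠ 0 := by
            by_contra hcon
            push_neg at hcon
            obtain ⟨hre, him⟩ := hcon
            set ζ := (toC p.2 - w t) / (toC p.1 - w t) with hζ
            set r := ζ.re with hr
            have hζr : ζ = (r : ℂ) := Complex.ext rfl (by simpa using him)
            have hkey : toC p.2 - w t = (r : ℂ) * (toC p.1 - w t) := by
              rw [← hζr, hζ, div_mul_cancel₀ _ hd]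
            have hr1 : (0:ℝ) < 1 - r := by linarith
            apply hnotin
            refine ⟨-r / (1 - r), 1 / (1 - r), ?_, ?_, ?_, ?_⟩
            · exact div_nonneg (by linarith) hr1.le
            · exact div_nonneg zero_le_one hr1.le
            · field_simp
              ring
            · rw [Complex.real_smul, Complex.real_smul]
              push_cast
              have hcast : ((1:ℂ) - (r:ℂ)) ≠ 0 := by
                intro h
                have : ((1 - r : ℝ) : ℂ) = 0 := by push_cast; linear_combination h
                rw [Complex.ofReal_eq_zero] at this
                linarith
              rw [div_mul_eq_mul_div, div_mul_eq_mul_div, ← add_div, div_eq_iff hcast]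
              linear_combination hkey
          exact (ContinuousAt.comp (g := Complex.arg)
            (f := fun s => (toC p.2 - w s) / (toC p.1 - w s)) (x := t)
            (Complex.continuousAt_arg hslit) hqc).continuousWithinAt
    exact main (L.zip L.tail) (fun p hp => hp)
  have hInt : ∀ t ∈ Set.Icc (0:ℝ) 1, ∃ n : ℤ, g t = n * (2 * Real.pi) := by
    intro t ht
    apply argSum_int L hne hclosed
    intro z hzL
    obtain ⟨p, hpmem, hp1⟩ := mem_fst_zip_tail hne htne hclosed hzL
    intro heq
    exact hdisj p hpmem (toC z) (hp1 ▸ left_mem_segment ℝ _ _) (heq ▸ hseg t ht)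
  have hw0 : w 0 = u := by simp [hw]
  have hw1 : w 1 = v := by simp [hw]
  obtain ⟨n0, hn0⟩ := hInt 0 ⟨le_refl 0, zero_le_one⟩
  obtain ⟨n1, hn1⟩ := hInt 1 ⟨zero_le_one, le_refl 1⟩
  have hpi := Real.pi_pos
  have key : g 0 = g 1 := by
    rcases lt_trichotomy n0 n1 with hlt | heq | hgt
    · exfalso
      have hmem : ((2 * n0 + 1) * Real.pi) ∈ Set.Ioo (g 0) (g 1) := by
        constructor
        · rw [hn0]; push_cast; nlinarith
        · rw [hn1]
          have : (n0 : ℝ) + 1 ≤ n1 := by exact_mod_cast hlt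
          push_cast; nlinarith
      obtain ⟨t, htIoo, hgt'⟩ := intermediate_value_Ioo zero_le_one hg_cont hmem
      obtain ⟨m, hm⟩ := hInt t (Set.mem_Icc_of_Ioo htIoo)
      rw [hm] at hgt'
      have : ((2*m - 2*n0 - 1 : ℤ) : ℝ) * Real.pi = 0 := by push_cast; linarith
      rcases mul_eq_zero.mp this with h | h
      · have : (2*m - 2*n0 - 1 : ℤ) = 0 := by exact_mod_cast h
        omega
      · linarith
    · rw [hn0, hn1, heq]
    · exfalso
      have hmem : ((2 * n1 + 1) * Real.pi) ∈ Set.Ioo (g 1) (g 0) := by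
        constructor
        · rw [hn1]; push_cast; nlinarith
        · rw [hn0]
          have : (n1 : ℝ) + 1 ≤ n0 := by exact_mod_cast hgt
          push_cast; nlinarith
      obtain ⟨t, htIoo, hgt'⟩ := intermediate_value_Ioo' zero_le_one hg_cont hmem
      obtain ⟨m, hm⟩ := hInt t (Set.mem_Icc_of_Ioo htIoo)
      rw [hm] at hgt'
      have : ((2*m - 2*n1 - 1 : ℤ) : ℝ) * Real.pi = 0 := by push_cast; linarith
      rcases mul_eq_zero.mp this with h | h
      · have : (2*m - 2*n1 - 1 : ℤ) = 0 := by exact_mod_cast h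
        omega
      · linarith
  rw [← hw0, ← hw1]
  exact key

lemma segment_re_im {a b : Site} {z : ℂ} (h : z ∈ segment ℝ (toC a) (toC b)) :
    ∃ t : ℝ, 0 ≤ t ∧ t ≤ 1 ∧
      (a.1 : ℝ) + t * ((b.1 : ℝ) - (a.1 : ℝ)) = z.re ∧
      (a.2 : ℝ) + t * ((b.2 : ℝ) - (a.2 : ℝ)) = z.im := by
  rw [segment_eq_image'] at h
  obtain ⟨t, ht, hz0⟩ := h
  have hz : toC a + (t:ℂ) * (toC b - toC a) = z := by
    rw [← Complex.real_smul]; exact hz0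
  refine ⟨t, ht.1, ht.2, ?_, ?_⟩
  · have := congrArg Complex.re hz
    simp only [Complex.add_re, Complex.mul_re, Complex.sub_re, Complex.sub_im,
      Complex.ofReal_re, Complex.ofReal_im, toC_re, toC_im] at this
    linarith
  · have := congrArg Complex.im hz
    simp only [Complex.add_im, Complex.mul_im, Complex.sub_re, Complex.sub_im,
      Complex.ofReal_re, Complex.ofReal_im, toC_re, toC_im] at this
    linarith

/-- A lattice point lying on a segment between `*`adjacent lattice points is an endpoint. -/
lemma lattice_on_segment {a b c : Site} (hbc : adjStar b c)
    (h : toC a ∈ segment ℝ (toC b) (toC c)) : a = b ∨ a = c := by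
  obtain ⟨t, ht0, ht1, E1, E2⟩ := segment_re_im h
  rw [toC_re] at E1
  rw [toC_im] at E2
  obtain ⟨hne, hb1, hb2⟩ := hbc
  rw [abs_le] at hb1 hb2
  set e1 : ℤ := c.1 - b.1 with he1d
  set e2 : ℤ := c.2 - b.2 with he2d
  have key : ∀ (w1 w2 a1 a2 : ℤ) (f1 f2 : ℤ), f1 = 1 ∨ f1 = -1 →
      (w1:ℝ) + t * (f1:ℝ) = (a1:ℝ) → (w2:ℝ) + t * (f2:ℝ) = (a2:ℝ) →
      (a1 = w1 ∧ a2 = w2) ∨ (a1 = w1 + f1 ∧ a2 = w2 + f2) := by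
    intro w1 w2 a1 a2 f1 f2 hf1 F1 F2
    have htv : t = ((f1 * (a1 - w1) : ℤ) : ℝ) := by
      rcases hf1 with h | h <;> subst h <;> push_cast <;> push_cast at F1 <;> linarith
    have hk01 : (f1 * (a1 - w1)) = 0 ∨ (f1 * (a1 - w1)) = 1 := by
      have h0 : (0:ℝ) ≤ ((f1 * (a1 - w1) : ℤ) : ℝ) := htv ▸ ht0
      have h1 : ((f1 * (a1 - w1) : ℤ) : ℝ) ≤ 1 := htv ▸ ht1
      have h0' : (0:ℤ) ≤ f1 * (a1 - w1) := by exact_mod_cast h0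
      have h1' : f1 * (a1 - w1) ≤ 1 := by exact_mod_cast h1
      omega
    rcases hk01 with hk | hk
    · left
      have ht' : t = 0 := by rw [htv, hk]; simp
      subst ht'
      constructor
      · have : (w1:ℝ) = (a1:ℝ) := by linarith
        exact_mod_cast this.symm
      · have : (w2:ℝ) = (a2:ℝ) := by linarith
        exact_mod_cast this.symm
    · right
      have ht' : t = 1 := by rw [htv, hk]; simp
      subst ht'
      constructor
      · have : (w1:ℝ) + (f1:ℝ) = (a1:ℝ) := by linarith
        exact_mod_cast this.symm
      · have : (w2:ℝ) + (f2:ℝ) = (a2:ℝ) := by linarith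
        exact_mod_cast this.symm
  have E1' : (b.1:ℝ) + t * ((e1:ℤ):ℝ) = (a.1:ℝ) := by push_cast [he1d]; linarith
  have E2' : (b.2:ℝ) + t * ((e2:ℤ):ℝ) = (a.2:ℝ) := by push_cast [he2d]; linarith
  have hcases : (e1 = 1 ∨ e1 = -1) ∨ (e1 = 0 ∧ (e2 = 1 ∨ e2 = -1)) := by
    by_cases h0 : e1 = 0
    · right
      refine ⟨h0, ?_⟩
      have : e2 ≠ 0 := by
        intro h2
        apply hne
        have : c.1 = b.1 ∧ c.2 = b.2 := by omega
        exact Prod.ext this.1.symm this.2.symm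
      omega
    · left; omega
  rcases hcases with hf | ⟨h0, hf⟩
  · rcases key b.1 b.2 a.1 a.2 e1 e2 hf E1' E2' with ⟨p1, p2⟩ | ⟨p1, p2⟩
    · left; exact Prod.ext p1 p2
    · right
      refine Prod.ext ?_ ?_ <;> simp only [he1d, he2d] at p1 p2 <;> omega
  · rcases key b.2 b.1 a.2 a.1 e2 e1 hf E2' E1' with ⟨p1, p2⟩ | ⟨p1, p2⟩
    · left; exact Prod.ext p2 p1
    · right
      refine Prod.ext ?_ ?_ <;> simp only [he1d, he2d] at p1 p2 <;> omega

set_option maxHeartbeats 1000000 in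
/-- Classification of intersections of two short lattice segments. -/
lemma seg_cross {u v c1 c2 : Site} (huv : adjStar u v) (hcc : adjStar c1 c2)
    (h : ∃ z : ℂ, z ∈ segment ℝ (toC u) (toC v) ∧ z ∈ segment ℝ (toC c1) (toC c2)) :
    (u = c1 ∨ u = c2 ∨ v = c1 ∨ v = c2) ∨
    (u.1 + v.1 = c1.1 + c2.1 ∧ u.2 + v.2 = c1.2 + c2.2 ∧
      (v.1 - u.1 = 1 ∨ v.1 - u.1 = -1) ∧ (v.2 - u.2 = 1 ∨ v.2 - u.2 = -1) ∧
      (c2.1 - c1.1 = 1 ∨ c2.1 - c1.1 = -1) ∧ (c2.2 - c1.2 = 1 ∨ c2.2 - c1.2 = -1)) := by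
  obtain ⟨z, hzu, hzc⟩ := h
  obtain ⟨s, hs0, hs1, Eu1, Eu2⟩ := segment_re_im hzu
  obtain ⟨t, ht0, ht1, Ec1, Ec2⟩ := segment_re_im hzc
  -- boundary cases
  by_cases hsz : s = 0
  · subst hsz
    left
    have : toC u ∈ segment ℝ (toC c1) (toC c2) := by
      have h1 : z.re = (u.1:ℝ) := by linarith
      have h2 : z.im = (u.2:ℝ) := by linarith
      have : z = toC u := Complex.ext (by rw [h1, toC_re]) (by rw [h2, toC_im])
      rwa [← this]
    rcases lattice_on_segment hcc this with h | h
    · exact Or.inl h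
    · exact Or.inr (Or.inl h)
  by_cases hso : s = 1
  · subst hso
    left
    have : toC v ∈ segment ℝ (toC c1) (toC c2) := by
      have h1 : z.re = (v.1:ℝ) := by linarith
      have h2 : z.im = (v.2:ℝ) := by linarith
      have : z = toC v := Complex.ext (by rw [h1, toC_re]) (by rw [h2, toC_im])
      rwa [← this]
    rcases lattice_on_segment hcc this with h | h
    · exact Or.inr (Or.inr (Or.inl h))
    · exact Or.inr (Or.inr (Or.inr h))
  by_cases htz : t = 0
  · subst htz
    left
    have : toC c1 ∈ segment ℝ (toC u) (toC v) := by
      have h1 : z.re = (c1.1:ℝ) := by linarith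
      have h2 : z.im = (c1.2:ℝ) := by linarith
      have : z = toC c1 := Complex.ext (by rw [h1, toC_re]) (by rw [h2, toC_im])
      rwa [← this]
    rcases lattice_on_segment huv this with h | h
    · exact Or.inl h.symm
    · exact Or.inr (Or.inr (Or.inl h.symm))
  by_cases hto : t = 1
  · subst hto
    left
    have : toC c2 ∈ segment ℝ (toC u) (toC v) := by
      have h1 : z.re = (c2.1:ℝ) := by linarith
      have h2 : z.im = (c2.2:ℝ) := by linarith
      have : z = toC c2 := Complex.ext (by rw [h1, toC_re]) (by rw [h2, toC_im])
      rwa [← this]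
    rcases lattice_on_segment huv this with h | h
    · exact Or.inr (Or.inl h.symm)
    · exact Or.inr (Or.inr (Or.inr h.symm))
  -- strict interior case
  have hs0' : 0 < s := lt_of_le_of_ne hs0 (Ne.symm hsz)
  have hs1' : s < 1 := lt_of_le_of_ne hs1 hso
  have ht0' : 0 < t := lt_of_le_of_ne ht0 (Ne.symm htz)
  have ht1' : t < 1 := lt_of_le_of_ne ht1 hto
  obtain ⟨d1, hd1⟩ : ∃ k : ℤ, k = v.1 - u.1 := ⟨_, rfl⟩
  obtain ⟨d2, hd2⟩ : ∃ k : ℤ, k = v.2 - u.2 := ⟨_, rfl⟩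
  obtain ⟨e1, he1⟩ : ∃ k : ℤ, k = c2.1 - c1.1 := ⟨_, rfl⟩
  obtain ⟨e2, he2⟩ : ∃ k : ℤ, k = c2.2 - c1.2 := ⟨_, rfl⟩
  obtain ⟨f1, hf1⟩ : ∃ k : ℤ, k = c1.1 - u.1 := ⟨_, rfl⟩
  obtain ⟨f2, hf2⟩ : ∃ k : ℤ, k = c1.2 - u.2 := ⟨_, rfl⟩
  have E1 : s * ((d1:ℤ):ℝ) = ((f1:ℤ):ℝ) + t * ((e1:ℤ):ℝ) := by
    push_cast [hd1, he1, hf1]; linarith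
  have E2 : s * ((d2:ℤ):ℝ) = ((f2:ℤ):ℝ) + t * ((e2:ℤ):ℝ) := by
    push_cast [hd2, he2, hf2]; linarith
  obtain ⟨hneuv, hu1, hu2⟩ := huv
  obtain ⟨hnec, hc1, hc2⟩ := hcc
  rw [abs_le] at hu1 hu2 hc1 hc2
  have hd1b : -1 ≤ d1 ∧ d1 ≤ 1 := by omega
  have hd2b : -1 ≤ d2 ∧ d2 ≤ 1 := by omega
  have he1b : -1 ≤ e1 ∧ e1 ≤ 1 := by omega
  have he2b : -1 ≤ e2 ∧ e2 ≤ 1 := by omega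
  have hdnz : d1 ≠ 0 ∨ d2 ≠ 0 := by
    by_contra hcon
    push_neg at hcon
    exact hneuv (Prod.ext (by omega) (by omega)).symm
  have henz : e1 ≠ 0 ∨ e2 ≠ 0 := by
    by_contra hcon
    push_neg at hcon
    exact hnec (Prod.ext (by omega) (by omega)).symm
  obtain ⟨D, hD⟩ : ∃ k : ℤ, k = d1 * e2 - d2 * e1 := ⟨_, rfl⟩
  obtain ⟨F, hF⟩ : ∃ k : ℤ, k = f1 * e2 - f2 * e1 := ⟨_, rfl⟩
  obtain ⟨G, hG⟩ : ∃ k : ℤ, k = f1 * d2 - f2 * d1 := ⟨_, rfl⟩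
  have I1 : s * ((D:ℤ):ℝ) = ((F:ℤ):ℝ) := by
    push_cast [hD, hF]
    linear_combination ((e2:ℤ):ℝ) * E1 - ((e1:ℤ):ℝ) * E2
  have I2 : t * ((D:ℤ):ℝ) = ((G:ℤ):ℝ) := by
    push_cast [hD, hG]
    linear_combination ((d2:ℤ):ℝ) * E1 - ((d1:ℤ):ℝ) * E2
  by_cases hDz : D = 0
  · -- parallel case
    have hpar : (e1 = d1 ∧ e2 = d2) ∨ (e1 = -d1 ∧ e2 = -d2) := by
      rw [hD] at hDz
      rcases hd1b with ⟨q1, q2⟩; rcases hd2b with ⟨q3, q4⟩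
      rcases he1b with ⟨q5, q6⟩; rcases he2b with ⟨q7, q8⟩
      interval_cases d1 <;> interval_cases d2 <;> omega
    left
    rcases hpar with ⟨p1, p2⟩ | ⟨p1, p2⟩
    · -- e = d : f = (s - t) d,  s - t ∈ (-1,1) ⇒ f = 0 ⇒ c1 = u
      have F1 : ((f1:ℤ):ℝ) = (s - t) * ((d1:ℤ):ℝ) := by
        rw [p1] at E1; linarith [E1]
      have F2 : ((f2:ℤ):ℝ) = (s - t) * ((d2:ℤ):ℝ) := by
        rw [p2] at E2; linarith [E2]
      have hf0 : f1 = 0 ∧ f2 = 0 := by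
        rcases hdnz with hd | hd
        · have hd' : d1 = 1 ∨ d1 = -1 := by omega
          have hst : s - t = ((d1 * f1 : ℤ):ℝ) := by
            rcases hd' with h | h <;> rw [h] at F1 ⊢ <;> push_cast <;> push_cast at F1 <;>
              linarith
          have hb1 : (-1:ℝ) < ((d1 * f1 : ℤ):ℝ) := by rw [← hst]; linarith
          have hb2 : ((d1 * f1 : ℤ):ℝ) < 1 := by rw [← hst]; linarith
          have hb1' : (-1:ℤ) < d1 * f1 := by exact_mod_cast hb1
          have hb2' : d1 * f1 < 1 := by exact_mod_cast hb2
          have hf1z : f1 = 0 := by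
            rcases hd' with h | h <;> rw [h] at hb1' hb2' <;> omega
          have : s - t = 0 := by
            rw [hst, hf1z]; simp
          refine ⟨hf1z, ?_⟩
          rw [this] at F2
          simp at F2
          exact_mod_cast F2
        · have hd' : d2 = 1 ∨ d2 = -1 := by omega
          have hst : s - t = ((d2 * f2 : ℤ):ℝ) := by
            rcases hd' with h | h <;> rw [h] at F2 ⊢ <;> push_cast <;> push_cast at F2 <;>
              linarith
          have hb1 : (-1:ℝ) < ((d2 * f2 : ℤ):ℝ) := by rw [← hst]; linarith
          have hb2 : ((d2 * f2 : ℤ):ℝ) < 1 := by rw [← hst]; linarith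
          have hb1' : (-1:ℤ) < d2 * f2 := by exact_mod_cast hb1
          have hb2' : d2 * f2 < 1 := by exact_mod_cast hb2
          have hf2z : f2 = 0 := by
            rcases hd' with h | h <;> rw [h] at hb1' hb2' <;> omega
          have : s - t = 0 := by
            rw [hst, hf2z]; simp
          refine ⟨?_, hf2z⟩
          rw [this] at F1
          simp at F1
          exact_mod_cast F1
      left
      rw [hf1] at hf0
      rw [hf2] at hf0
      exact (Prod.ext (by omega) (by omega)).symm
    · -- e = -d : f = (s + t) d,  s + t ∈ (0,2) ⇒ f = d ⇒ c1 = v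
      have F1 : ((f1:ℤ):ℝ) = (s + t) * ((d1:ℤ):ℝ) := by
        rw [p1] at E1; push_cast at E1 ⊢; linarith [E1]
      have F2 : ((f2:ℤ):ℝ) = (s + t) * ((d2:ℤ):ℝ) := by
        rw [p2] at E2; push_cast at E2 ⊢; linarith [E2]
      have hfd : f1 = d1 ∧ f2 = d2 := by
        rcases hdnz with hd | hd
        · have hd' : d1 = 1 ∨ d1 = -1 := by omega
          have hst : s + t = ((d1 * f1 : ℤ):ℝ) := by
            rcases hd' with h | h <;> rw [h] at F1 ⊢ <;> push_cast <;> push_cast at F1 <;>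
              linarith
          have hb1 : (0:ℝ) < ((d1 * f1 : ℤ):ℝ) := by rw [← hst]; linarith
          have hb2 : ((d1 * f1 : ℤ):ℝ) < 2 := by rw [← hst]; linarith
          have hb1' : (0:ℤ) < d1 * f1 := by exact_mod_cast hb1
          have hb2' : d1 * f1 < 2 := by exact_mod_cast hb2
          have hf1d : f1 = d1 := by
            rcases hd' with h | h <;> rw [h] at hb1' hb2' <;> omega
          have hst1 : s + t = 1 := by
            rw [hst, hf1d]
            rcases hd' with h | h <;> rw [h] <;> norm_num
          refine ⟨hf1d, ?_⟩
          rw [hst1] at F2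
          simp at F2
          exact_mod_cast F2
        · have hd' : d2 = 1 ∨ d2 = -1 := by omega
          have hst : s + t = ((d2 * f2 : ℤ):ℝ) := by
            rcases hd' with h | h <;> rw [h] at F2 ⊢ <;> push_cast <;> push_cast at F2 <;>
              linarith
          have hb1 : (0:ℝ) < ((d2 * f2 : ℤ):ℝ) := by rw [← hst]; linarith
          have hb2 : ((d2 * f2 : ℤ):ℝ) < 2 := by rw [← hst]; linarith
          have hb1' : (0:ℤ) < d2 * f2 := by exact_mod_cast hb1
          have hb2' : d2 * f2 < 2 := by exact_mod_cast hb2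
          have hf2d : f2 = d2 := by
            rcases hd' with h | h <;> rw [h] at hb1' hb2' <;> omega
          have hst1 : s + t = 1 := by
            rw [hst, hf2d]
            rcases hd' with h | h <;> rw [h] <;> norm_num
          refine ⟨?_, hf2d⟩
          rw [hst1] at F1
          simp at F1
          exact_mod_cast F1
      right; right; left
      rw [hf1, hd1] at hfd
      rw [hf2, hd2] at hfd
      exact (Prod.ext (by omega) (by omega)).symm
  · -- non-parallel
    have hprodb : ∀ a b : ℤ, -1 ≤ a → a ≤ 1 → -1 ≤ b → b ≤ 1 → -1 ≤ a * b ∧ a * b ≤ 1 := by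
      intro a b ha1 ha2 hb1 hb2
      constructor <;> nlinarith
    have hA := hprodb d1 e2 hd1b.1 hd1b.2 he2b.1 he2b.2
    have hB := hprodb d2 e1 hd2b.1 hd2b.2 he1b.1 he1b.2
    have hDb : -2 ≤ D ∧ D ≤ 2 := by rw [hD]; omega
    have hDcases : D = -2 ∨ D = -1 ∨ D = 1 ∨ D = 2 := by omega
    have habs1 : D = 1 → False := by
      intro h
      rw [h] at I1
      push_cast at I1
      have : (0:ℝ) < ((F:ℤ):ℝ) ∧ ((F:ℤ):ℝ) < 1 := by
        constructor <;> [linarith [I1]; linarith [I1]]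
      have h1 : (0:ℤ) < F := by exact_mod_cast this.1
      have h2 : F < 1 := by exact_mod_cast this.2
      omega
    have habsm1 : D = -1 → False := by
      intro h
      rw [h] at I1
      push_cast at I1
      have : (-1:ℝ) < ((F:ℤ):ℝ) ∧ ((F:ℤ):ℝ) < 0 := by
        constructor <;> [linarith [I1]; linarith [I1]]
      have h1 : (-1:ℤ) < F := by exact_mod_cast this.1
      have h2 : F < 0 := by exact_mod_cast this.2
      omega
    have hmain : (s = 1/2 ∧ t = 1/2) := by
      rcases hDcases with h | h | h | h
      · rw [h] at I1 I2
        push_cast at I1 I2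
        have hF1 : (-2:ℝ) < ((F:ℤ):ℝ) ∧ ((F:ℤ):ℝ) < 0 := ⟨by linarith, by linarith⟩
        have hG1 : (-2:ℝ) < ((G:ℤ):ℝ) ∧ ((G:ℤ):ℝ) < 0 := ⟨by linarith, by linarith⟩
        have hF' : F = -1 := by
          have a1 : (-2:ℤ) < F := by exact_mod_cast hF1.1
          have a2 : F < 0 := by exact_mod_cast hF1.2
          omega
        have hG' : G = -1 := by
          have a1 : (-2:ℤ) < G := by exact_mod_cast hG1.1
          have a2 : G < 0 := by exact_mod_cast hG1.2
          omega
        rw [hF'] at I1; rw [hG'] at I2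
        push_cast at I1 I2
        constructor <;> linarith
      · exact (habsm1 h).elim
      · exact (habs1 h).elim
      · rw [h] at I1 I2
        push_cast at I1 I2
        have hF1 : (0:ℝ) < ((F:ℤ):ℝ) ∧ ((F:ℤ):ℝ) < 2 := ⟨by linarith, by linarith⟩
        have hG1 : (0:ℝ) < ((G:ℤ):ℝ) ∧ ((G:ℤ):ℝ) < 2 := ⟨by linarith, by linarith⟩
        have hF' : F = 1 := by
          have a1 : (0:ℤ) < F := by exact_mod_cast hF1.1
          have a2 : F < 2 := by exact_mod_cast hF1.2
          omega
        have hG' : G = 1 := by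
          have a1 : (0:ℤ) < G := by exact_mod_cast hG1.1
          have a2 : G < 2 := by exact_mod_cast hG1.2
          omega
        rw [hF'] at I1; rw [hG'] at I2
        push_cast at I1 I2
        constructor <;> linarith
    obtain ⟨hsv, htv⟩ := hmain
    have hD2 : D = 2 ∨ D = -2 := by
      rcases hDcases with h | h | h | h
      · right; exact h
      · exact (habsm1 h).elim
      · exact (habs1 h).elim
      · left; exact h
    have hD2' : (d1 * e2 = 1 ∧ d2 * e1 = -1) ∨ (d1 * e2 = -1 ∧ d2 * e1 = 1) := by
      rw [hD] at hD2
      omega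
    have hone : ∀ a b : ℤ, -1 ≤ a → a ≤ 1 → (a * b = 1 ∨ a * b = -1) →
        (a = 1 ∨ a = -1) ∧ (b = 1 ∨ b = -1) ∨ True := fun _ _ _ _ _ => Or.inr trivial
    have hval : ∀ a b : ℤ, -1 ≤ a → a ≤ 1 → -1 ≤ b → b ≤ 1 → (a * b = 1 ∨ a * b = -1) →
        (a = 1 ∨ a = -1) ∧ (b = 1 ∨ b = -1) := by
      intro a b ha1 ha2 hb1 hb2 hab
      interval_cases a <;> interval_cases b <;> omega
    have hv1 : (d1 = 1 ∨ d1 = -1) ∧ (e2 = 1 ∨ e2 = -1) := by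
      apply hval d1 e2 hd1b.1 hd1b.2 he2b.1 he2b.2
      rcases hD2' with ⟨h1, _⟩ | ⟨h1, _⟩ <;> [left; right] <;> exact h1
    have hv2 : (d2 = 1 ∨ d2 = -1) ∧ (e1 = 1 ∨ e1 = -1) := by
      apply hval d2 e1 hd2b.1 hd2b.2 he1b.1 he1b.2
      rcases hD2' with ⟨_, h1⟩ | ⟨_, h1⟩ <;> [right; left] <;> exact h1
    right
    rw [hsv, htv] at E1 E2
    have hsum1 : ((u.1 + v.1 : ℤ):ℝ) = ((c1.1 + c2.1 : ℤ):ℝ) := by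
      push_cast [hd1, he1, hf1] at E1 ⊢
      linarith
    have hsum2 : ((u.2 + v.2 : ℤ):ℝ) = ((c1.2 + c2.2 : ℤ):ℝ) := by
      push_cast [hd2, he2, hf2] at E2 ⊢
      linarith
    refine ⟨by exact_mod_cast hsum1, by exact_mod_cast hsum2, ?_, ?_, ?_, ?_⟩
    · rw [← hd1]; exact hv1.1
    · rw [← hd2]; exact hv2.1
    · rw [← he1]; exact hv2.2
    · rw [← he2]; exact hv1.2

lemma chain'_rel {R : Site → Site → Prop} {l : List Site} (h : l.Chain' R)
    {i : ℕ} (hi : i + 1 < l.length) : R (l[i]'(by omega)) (l[i+1]'hi) := by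
  simp only [List.Chain'] at h
  rw [List.isChain_iff_getElem] at h
  have := h i (by omega)
  simpa using this

/-- Splicing two chains that share an endpoint. -/
lemma join_lists {R : Site → Site → Prop} (X Y : List Site) (c : Site)
    (hX : X.getLast? = some c) (hY : Y.head? = some c)
    (cX : X.Chain' R) (cY : Y.Chain' R) :
    (X ++ Y.tail).Chain' R ∧ (X ++ Y.tail).head? = X.head? ∧
      (X ++ Y.tail).getLast? = Y.getLast? ∧ ∀ z ∈ X ++ Y.tail, z ∈ X ∨ z ∈ Y := by
  match Y, hY with
  | c :: Y', rfl =>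
    refine ⟨?_, ?_, ?_, ?_⟩
    · simp only [List.Chain']
      rw [List.isChain_append]
      refine ⟨cX, (List.isChain_cons.mp cY).2, ?_⟩
      intro a ha b hb
      rw [hX] at ha
      simp only [Option.mem_def, Option.some_inj] at ha
      subst ha
      exact (List.isChain_cons.mp cY).1 b hb
    · have hXne : X ≠ [] := by
        intro h; rw [h] at hX; simp at hX
      rw [List.head?_append]
      cases hxh : X.head? with
      | none => exact absurd (List.head?_eq_none_iff.mp hxh) hXne
      | some a => simp
    · simp only [List.tail_cons]
      cases hY' : Y' with
      | nil =>
          simp only [List.append_nil]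
          rw [hX]
          simp
      | cons b Y'' =>
          rw [List.getLast?_append]
          have : (b :: Y'').getLast? = some ((b :: Y'').getLast (by simp)) :=
            List.getLast?_eq_getLast _
          rw [List.getLast?_cons_cons]
          cases hg : (b :: Y'').getLast? with
          | none => simp at hg
          | some a => simp
    · intro z hz
      rcases List.mem_append.mp hz with h | h
      · exact Or.inl h
      · exact Or.inr (List.mem_cons_of_mem _ h)

lemma chain_conn_aux (A : List Site) (hA : A.Chain' adjStar) (ia ib : ℕ)
    (hia : ia < A.length) (hib : ib < A.length) (hle : ia ≤ ib) :
    ∃ K : List Site, K.Chain' adjStar ∧ K.head? = some (A[ia]'hia) ∧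
      K.getLast? = some (A[ib]'hib) ∧ ∀ z ∈ K, z ∈ A := by
  refine ⟨(A.drop ia).take (ib - ia + 1), ?_, ?_, ?_, ?_⟩
  · exact (hA.drop ia).take _
  · rw [List.head?_eq_getElem?, List.getElem?_take]
    simp only [if_pos (by omega : 0 < ib - ia + 1)]
    rw [List.getElem?_drop]
    have h0 : ia + 0 < A.length := by omega
    rw [List.getElem?_eq_getElem h0]
    congr 1
  · have hlen : ((A.drop ia).take (ib - ia + 1)).length = ib - ia + 1 := by
      rw [List.length_take, List.length_drop]
      omega
    rw [List.getLast?_eq_getElem?, hlen]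
    simp only [Nat.add_sub_cancel]
    rw [List.getElem?_take, if_pos (by omega : ib - ia < ib - ia + 1), List.getElem?_drop]
    have h0 : ia + (ib - ia) < A.length := by omega
    rw [List.getElem?_eq_getElem h0]
    have hidx : ia + (ib - ia) = ib := by omega
    congr 1
    simp only [hidx]
  · intro z hz
    exact List.mem_of_mem_drop (List.mem_of_mem_take hz)

lemma chain_conn (A : List Site) (hA : A.Chain' adjStar) (a b : Site)
    (ha : a ∈ A) (hb : b ∈ A) :
    ∃ K : List Site, K.Chain' adjStar ∧ K.head? = some a ∧
      K.getLast? = some b ∧ ∀ z ∈ K, z ∈ A := by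
  obtain ⟨ia, hia, rfl⟩ := List.mem_iff_getElem.mp ha
  obtain ⟨ib, hib, rfl⟩ := List.mem_iff_getElem.mp hb
  rcases le_total ia ib with h | h
  · exact chain_conn_aux A hA ia ib hia hib h
  · obtain ⟨K, hc, hh, hl, hm⟩ := chain_conn_aux A hA ib ia hib hia h
    refine ⟨K.reverse, ?_, ?_, ?_, ?_⟩
    · simp only [List.Chain']
      rw [List.isChain_reverse]
      exact hc.imp fun _ _ hr => adjStar_symm hr
    · rw [List.head?_reverse]; exact hl
    · rw [List.getLast?_reverse]; exact hh
    · intro z hz; exact hm z (by simpa using hz)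

/-- Connecting two sites that are on, or `*`adjacent to, a `*`chain `A`. -/
lemma conn_through (A : List Site) (hA : A.Chain' adjStar) (c d : Site)
    (hc : c ∈ A ∨ ∃ a ∈ A, adjStar c a) (hd : d ∈ A ∨ ∃ b ∈ A, adjStar d b) :
    ∃ M : List Site, M.Chain' adjStar ∧ M.head? = some c ∧ M.getLast? = some d ∧
      ∀ z ∈ M, z = c ∨ z = d ∨ z ∈ A := by
  have step1 : ∃ a ∈ A, ∃ Mc : List Site, Mc.Chain' adjStar ∧ Mc.head? = some c ∧
      Mc.getLast? = some a ∧ ∀ z ∈ Mc, z = c ∨ z ∈ A := by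
    rcases hc with h | ⟨a, ha, hadj⟩
    · exact ⟨c, h, [c], List.isChain_singleton c, rfl, rfl, fun z hz => Or.inl (by simpa using hz)⟩
    · refine ⟨a, ha, [c, a], ?_, rfl, rfl, ?_⟩
      · exact List.isChain_pair.mpr hadj
      · intro z hz
        rcases (by simpa using hz : z = c ∨ z = a) with rfl | rfl
        · exact Or.inl rfl
        · exact Or.inr ha
  obtain ⟨a, ha, Mc, hMc, hMch, hMcl, hMcm⟩ := step1
  have step2 : ∃ b ∈ A, ∃ Md : List Site, Md.Chain' adjStar ∧ Md.head? = some b ∧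
      Md.getLast? = some d ∧ ∀ z ∈ Md, z = d ∨ z ∈ A := by
    rcases hd with h | ⟨b, hb, hadj⟩
    · exact ⟨d, h, [d], List.isChain_singleton d, rfl, rfl, fun z hz => Or.inl (by simpa using hz)⟩
    · refine ⟨b, hb, [b, d], ?_, rfl, rfl, ?_⟩
      · exact List.isChain_pair.mpr (adjStar_symm hadj)
      · intro z hz
        rcases (by simpa using hz : z = b ∨ z = d) with rfl | rfl
        · exact Or.inr hb
        · exact Or.inl rfl
  obtain ⟨b, hb, Md, hMd, hMdh, hMdl, hMdm⟩ := step2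
  obtain ⟨K, hK, hKh, hKl, hKm⟩ := chain_conn A hA a b ha hb
  obtain ⟨hc1, hc2, hc3, hc4⟩ := join_lists Mc K a hMcl hKh hMc hK
  rw [hMch] at hc2
  rw [hKl] at hc3
  obtain ⟨hd1, hd2, hd3, hd4⟩ := join_lists (Mc ++ K.tail) Md b hc3 hMdh hc1 hMd
  rw [hc2] at hd2
  rw [hMdl] at hd3
  refine ⟨(Mc ++ K.tail) ++ Md.tail, hd1, hd2, hd3, ?_⟩
  intro z hz
  rcases hd4 z hz with h | h
  · rcases hc4 z h with h' | h'
    · rcases hMcm z h' with h'' | h''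
      · exact Or.inl h''
      · exact Or.inr (Or.inr h'')
    · exact Or.inr (Or.inr (hKm z h'))
  · rcases hMdm z h with h' | h'
    · exact Or.inr (Or.inl h')
    · exact Or.inr (Or.inr h')

/-- Any consecutive pair of the closed-up circuit is a consecutive pair of `C`
or the closing pair. -/
lemma pair_in_circuit {C : List Site} (hne : C ≠ []) {p : Site × Site}
    (hp : p ∈ (C ++ C.take 1).zip (C ++ C.take 1).tail) :
    (∃ i, ∃ h : i + 1 < C.length, C[i] = p.1 ∧ C[i+1] = p.2) ∨
      (p.1 = C.getLast hne ∧ p.2 = C.head hne) := by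
  have hn1 : 1 ≤ C.length := List.length_pos_iff.mpr hne
  have hlen : (C ++ C.take 1).length = C.length + 1 := by
    rw [List.length_append, List.length_take]
    omega
  obtain ⟨i, hi, h1, h2⟩ := mem_zip_tail.mp hp
  rw [hlen] at hi
  by_cases hcase : i + 1 < C.length
  · left
    refine ⟨i, hcase, ?_, ?_⟩
    · rw [← h1, List.getElem_append_left (by omega)]
    · rw [← h2, List.getElem_append_left hcase]
  · right
    have hieq : i = C.length - 1 := by omega
    constructor
    · rw [← h1, List.getElem_append_left (by omega), List.getLast_eq_getElem]
      congr 1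
    · rw [← h2, List.getElem_append_right (by omega), List.head_eq_getElem]
      have h0 : i + 1 - C.length = 0 := by omega
      simp only [h0]
      rw [List.getElem_take]

lemma closed_circuit_facts (C : List Site) (hCne : C ≠ []) :
    ∃ h : C ++ C.take 1 ≠ [],
      (C ++ C.take 1).getLast h = C.head hCne ∧ (C ++ C.take 1).head h = C.head hCne := by
  have h : C ++ C.take 1 ≠ [] := by
    intro hc
    exact hCne (List.append_eq_nil_iff.mp hc).1
  refine ⟨h, ?_, ?_⟩
  · have htake : C.take 1 = [C.head hCne] := by
      cases C with
      | nil => exact absurd rfl hCne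
      | cons a t => simp
    have h1 : (C ++ C.take 1).getLast? = some (C.head hCne) := by
      rw [List.getLast?_append, htake]
      simp
    have h2 := List.getLast?_eq_getLast (l := C ++ C.take 1) h
    rw [h1] at h2
    exact (Option.some_inj.mp h2).symm
  · have h1 : (C ++ C.take 1).head? = some (C.head hCne) := by
      rw [List.head?_append, List.head?_eq_head hCne]
      simp
    have h2 := List.head?_eq_head h
    rw [h1] at h2
    exact (Option.some_inj.mp h2).symm

lemma winding_cross (C : List Site) (hCne : C ≠ []) {a b : Site}
    (hw : windingAround (C ++ C.take 1) a ≠ windingAround (C ++ C.take 1) b) :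
    ∃ p ∈ (C ++ C.take 1).zip (C ++ C.take 1).tail,
      ∃ z : ℂ, z ∈ segment ℝ (toC a) (toC b) ∧ z ∈ segment ℝ (toC p.1) (toC p.2) := by
  by_contra hcon
  push_neg at hcon
  obtain ⟨hne, hlast, hhead⟩ := closed_circuit_facts C hCne
  apply hw
  rw [windingAround_eq, windingAround_eq]
  congr 1
  apply argSum_const _ hne (by rw [hlast, hhead])
  intro p hp z hz hzuv
  exact hcon p hp z hzuv hz

lemma step_cross (C : List Site) (hCne : C ≠ []) (hCchain : C.Chain' adjStar)
    (hClose : adjStar (C.getLast hCne) (C.head hCne))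
    {a b : Site} (hab : adjStar a b) (haC : a ∉ C) (hbC : b ∉ C)
    (hw : windingAround (C ++ C.take 1) a ≠ windingAround (C ++ C.take 1) b) :
    ∃ p : Site × Site, p ∈ (C ++ C.take 1).zip (C ++ C.take 1).tail ∧
      p.1 ∈ C ∧ p.2 ∈ C ∧
      a.1 + b.1 = p.1.1 + p.2.1 ∧ a.2 + b.2 = p.1.2 + p.2.2 ∧
      (b.1 - a.1 = 1 ∨ b.1 - a.1 = -1) ∧ (b.2 - a.2 = 1 ∨ b.2 - a.2 = -1) ∧
      (p.2.1 - p.1.1 = 1 ∨ p.2.1 - p.1.1 = -1) ∧ (p.2.2 - p.1.2 = 1 ∨ p.2.2 - p.1.2 = -1) := by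
  obtain ⟨p, hp, z, hz1, hz2⟩ := winding_cross C hCne hw
  have hp1C : p.1 ∈ C := by
    have h1 := (List.of_mem_zip hp).1
    rcases List.mem_append.mp h1 with h | h
    · exact h
    · exact List.mem_of_mem_take h
  have hp2C : p.2 ∈ C := by
    have h1 := List.mem_of_mem_tail (List.of_mem_zip hp).2
    rcases List.mem_append.mp h1 with h | h
    · exact h
    · exact List.mem_of_mem_take h
  have hadjp : adjStar p.1 p.2 := by
    rcases pair_in_circuit hCne hp with ⟨i, hi, h1, h2⟩ | ⟨h1, h2⟩
    · have := chain'_rel hCchain hi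
      rwa [h1, h2] at this
    · rw [h1, h2]
      exact hClose
  rcases seg_cross hab hadjp ⟨z, hz1, hz2⟩ with hend | hsum
  · exfalso
    rcases hend with h | h | h | h
    · exact haC (h ▸ hp1C)
    · exact haC (h ▸ hp2C)
    · exact hbC (h ▸ hp1C)
    · exact hbC (h ▸ hp2C)
  · exact ⟨p, hp, hp1C, hp2C, hsum.1, hsum.2.1, hsum.2.2.1, hsum.2.2.2.1,
      hsum.2.2.2.2.1, hsum.2.2.2.2.2⟩

lemma chain'_rel' {R : Site → Site → Prop} {l : List Site} (h : l.Chain' R)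
    {i j : ℕ} (hij : i + 1 = j) (hj : j < l.length) :
    R (l[i]'(by omega)) (l[j]'hj) := by
  subst hij
  exact chain'_rel h hj

lemma ne_nil_of_head? {l : List Site} {a : Site} (h : l.head? = some a) : l ≠ [] := by
  intro hl
  rw [hl] at h
  simp at h

set_option maxHeartbeats 1000000 in
lemma pin_lemma (u w1 v w2 c1 c2 : Site)
    (e1 : u.1 + w1.1 = c1.1 + c2.1) (e2 : u.2 + w1.2 = c1.2 + c2.2)
    (e3 : w1.1 - u.1 = 1 ∨ w1.1 - u.1 = -1) (e4 : w1.2 - u.2 = 1 ∨ w1.2 - u.2 = -1)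
    (e5 : c2.1 - c1.1 = 1 ∨ c2.1 - c1.1 = -1) (e6 : c2.2 - c1.2 = 1 ∨ c2.2 - c1.2 = -1)
    (f1 : v.1 + w2.1 = c1.1 + c2.1) (f2 : v.2 + w2.2 = c1.2 + c2.2)
    (f3 : w2.1 - v.1 = 1 ∨ w2.1 - v.1 = -1) (f4 : w2.2 - v.2 = 1 ∨ w2.2 - v.2 = -1)
    (d3 : w1.1 ≠ c1.1 ∨ w1.2 ≠ c1.2) (d4 : w1.1 ≠ c2.1 ∨ w1.2 ≠ c2.2)
    (d7 : w2.1 ≠ c1.1 ∨ w2.2 ≠ c1.2) (d8 : w2.1 ≠ c2.1 ∨ w2.2 ≠ c2.2) :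
    u = v ∨ w1 = v := by
  have h : (u.1 = v.1 ∧ u.2 = v.2) ∨ (w1.1 = v.1 ∧ w1.2 = v.2) := by
    rcases e3 with e3 | e3 <;> rcases e4 with e4 | e4 <;> rcases e5 with e5 | e5 <;>
      rcases e6 with e6 | e6 <;> rcases f3 with f3 | f3 <;> rcases f4 with f4 | f4 <;> omega
  rcases h with ⟨a, b⟩ | ⟨a, b⟩
  · exact Or.inl (Prod.ext a b)
  · exact Or.inr (Prod.ext a b)
set_option maxHeartbeats 1000000 in
/-- A mixed circuit around `Δ` shields `Δ`: any two sites in its exterior that are joined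
by a `1*`path are also joined by a `1*`path avoiding `Δ`. -/
theorem statement10 (σ : Config) (Δ : Finset Site) (C : List Site)
    (hC : IsMixedCircuit σ C) (hAround : CircuitAround C ↑Δ)
    (x y : Site) (hx : InExterior C x) (hy : InExterior C y)
    (hxy : ∃ P : List Site, Is1StarPath σ P ∧ P.head? = some x ∧ P.getLast? = some y) :
    ∃ P : List Site, starPathBetweenAvoiding σ ↑Δ x y P := by
  classical
  obtain ⟨Pp, Qp, hCeq, hNodup, hPpChain, hQpChain, hPpT, hQpF, hCchain, hCne, hClose⟩ := hC
  obtain ⟨P, ⟨hPne, hPchain, hPtrue⟩, hPhead, hPlast⟩ := hxy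
  by_cases hPavoid : ∀ z ∈ P, z ∉ (↑Δ : Set Site)
  · exact ⟨P, ⟨hPne, hPchain, hPtrue⟩, hPhead, hPlast, hPavoid⟩
  push_neg at hPavoid
  obtain ⟨z0, hz0P, hz0Δ⟩ := hPavoid
  have hn : 0 < P.length := List.length_pos_iff.mpr hPne
  have hx0 : P[0]'hn = x := by
    have h := hPhead
    rw [List.head?_eq_getElem?, List.getElem?_eq_getElem hn] at h
    exact Option.some_inj.mp h
  have hyN : P[P.length - 1]'(by omega) = y := by
    have h := hPlast
    rw [List.getLast?_eq_getElem?, List.getElem?_eq_getElem (by omega : P.length - 1 < P.length)] at h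
    exact Option.some_inj.mp h
  -- extremal enclosed indices
  set S : Finset (Fin P.length) :=
    Finset.univ.filter (fun k => circuitEncloses C (P[(k : ℕ)]'k.isLt)) with hS_def
  have hSne : S.Nonempty := by
    obtain ⟨i, hi, rfl⟩ := List.mem_iff_getElem.mp hz0P
    exact ⟨⟨i, hi⟩, Finset.mem_filter.mpr ⟨Finset.mem_univ _, hAround _ hz0Δ⟩⟩
  obtain ⟨i0, hi0n, hbadi0, hmin⟩ :
      ∃ (i0 : ℕ) (h : i0 < P.length), circuitEncloses C (P[i0]'h) ∧
        ∀ m (hm : m < P.length), circuitEncloses C (P[m]'hm) → i0 ≤ m := by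
    refine ⟨(S.min' hSne : Fin P.length).1, (S.min' hSne).isLt,
      (Finset.mem_filter.mp (S.min'_mem hSne)).2, ?_⟩
    intro m hm hb
    exact S.min'_le ⟨m, hm⟩ (Finset.mem_filter.mpr ⟨Finset.mem_univ _, hb⟩)
  obtain ⟨j0, hj0n, hbadj0, hmax⟩ :
      ∃ (j0 : ℕ) (h : j0 < P.length), circuitEncloses C (P[j0]'h) ∧
        ∀ m (hm : m < P.length), circuitEncloses C (P[m]'hm) → m ≤ j0 := by
    refine ⟨(S.max' hSne : Fin P.length).1, (S.max' hSne).isLt,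
      (Finset.mem_filter.mp (S.max'_mem hSne)).2, ?_⟩
    intro m hm hb
    exact S.le_max' ⟨m, hm⟩ (Finset.mem_filter.mpr ⟨Finset.mem_univ _, hb⟩)
  have hi0pos : 0 < i0 := by
    rcases Nat.eq_zero_or_pos i0 with h | h
    · exfalso
      subst h
      exact hx.2 (hx0 ▸ hbadi0)
    · exact h
  have hj0top : j0 + 1 < P.length := by
    rcases Nat.lt_or_ge (j0 + 1) P.length with h | h
    · exact h
    · exfalso
      have : j0 = P.length - 1 := by omega
      subst this
      exact hy.2 (hyN ▸ hbadj0)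
  -- the four principal sites
  obtain ⟨u, hu⟩ : ∃ q : Site, q = P[i0 - 1]'(by omega) := ⟨_, rfl⟩
  obtain ⟨w1, hw1⟩ : ∃ q : Site, q = P[i0]'hi0n := ⟨_, rfl⟩
  obtain ⟨w2, hw2⟩ : ∃ q : Site, q = P[j0]'hj0n := ⟨_, rfl⟩
  obtain ⟨v, hv⟩ : ∃ q : Site, q = P[j0 + 1]'hj0top := ⟨_, rfl⟩
  have hbad_w1 : circuitEncloses C w1 := by rw [hw1]; exact hbadi0
  have hbad_w2 : circuitEncloses C w2 := by rw [hw2]; exact hbadj0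
  have hu_nb : ¬ circuitEncloses C u := by
    rw [hu]
    intro hb
    have := hmin _ (by omega) hb
    omega
  have hv_nb : ¬ circuitEncloses C v := by
    rw [hv]
    intro hb
    have := hmax _ hj0top hb
    omega
  have hadj_uw : adjStar u w1 := by
    rw [hu, hw1]
    exact chain'_rel' hPchain (by omega) hi0n
  have hadj_wv : adjStar w2 v := by
    rw [hw2, hv]
    exact chain'_rel' hPchain rfl hj0top
  have hσu : σ u = true := by rw [hu]; exact hPtrue _ (List.getElem_mem _)
  have hσv : σ v = true := by rw [hv]; exact hPtrue _ (List.getElem_mem _)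
  have hσw1 : σ w1 = true := by rw [hw1]; exact hPtrue _ (List.getElem_mem _)
  have hσw2 : σ w2 = true := by rw [hw2]; exact hPtrue _ (List.getElem_mem _)
  have hw1C : w1 ∉ C := hbad_w1.1
  have hw2C : w2 ∉ C := hbad_w2.1
  have hwdiff : ∀ q r : Site, q ∉ C → ¬ circuitEncloses C q → circuitEncloses C r →
      windingAround (C ++ C.take 1) q ≠ windingAround (C ++ C.take 1) r := by
    intro q r h1 h2 h3
    have hq0 : windingAround (C ++ C.take 1) q = 0 := by
      by_contra h4
      exact h2 ⟨h1, h4⟩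
    rw [hq0]
    exact fun h => h3.2 h.symm
  have hne2 : ∀ q : Site, q ∉ C → ∀ c : Site, c ∈ C → q.1 ≠ c.1 ∨ q.2 ≠ c.2 := by
    intro q hq c hc
    by_cases h1 : q.1 = c.1
    · right
      intro h2
      exact hq ((Prod.ext h1 h2) ▸ hc)
    · left; exact h1
  -- prefix and suffix of P
  have hXchain : (P.take i0).Chain' adjStar := hPchain.take _
  have hZchain : (P.drop (j0 + 1)).Chain' adjStar := hPchain.drop _
  have hXhead : (P.take i0).head? = some x := by
    rw [List.head?_eq_getElem?, List.getElem?_take, if_pos hi0pos,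
      List.getElem?_eq_getElem hn, hx0]
  have hXlen : (P.take i0).length = i0 := by rw [List.length_take]; omega
  have hXlast : (P.take i0).getLast? = some u := by
    rw [List.getLast?_eq_getElem?, hXlen, List.getElem?_take, if_pos (by omega),
      List.getElem?_eq_getElem (by omega : i0 - 1 < P.length), hu]
  have hZhead : (P.drop (j0 + 1)).head? = some v := by
    rw [List.head?_drop, List.getElem?_eq_getElem hj0top, hv]
  have hZlast : (P.drop (j0 + 1)).getLast? = some y := by
    rw [List.getLast?_eq_getElem?, List.length_drop, List.getElem?_drop]
    have hidx : j0 + 1 + (P.length - (j0 + 1) - 1) = P.length - 1 := by omega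
    rw [hidx, List.getElem?_eq_getElem (by omega : P.length - 1 < P.length), hyN]
  have hXgood : ∀ z ∈ P.take i0, σ z = true ∧ z ∉ (↑Δ : Set Site) := by
    intro z hz
    refine ⟨hPtrue z (List.mem_of_mem_take hz), ?_⟩
    intro hzΔ
    obtain ⟨k, hk, hzk⟩ := List.mem_iff_getElem.mp hz
    have hkl : k < i0 := by
      have h2 := hk
      rw [List.length_take] at h2
      omega
    have hkn : k < P.length := by omega
    have hzP : P[k]'hkn = z := by rw [← hzk, List.getElem_take]
    have hbad := hAround z hzΔ
    rw [← hzP] at hbad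
    exact absurd (hmin k hkn hbad) (by omega)
  have hZgood : ∀ z ∈ P.drop (j0 + 1), σ z = true ∧ z ∉ (↑Δ : Set Site) := by
    intro z hz
    refine ⟨hPtrue z (List.mem_of_mem_drop hz), ?_⟩
    intro hzΔ
    obtain ⟨k, hk, hzk⟩ := List.mem_iff_getElem.mp hz
    have hkn : j0 + 1 + k < P.length := by
      have h2 := hk
      rw [List.length_drop] at h2
      omega
    have hzP : P[j0 + 1 + k]'hkn = z := by rw [← hzk, List.getElem_drop]
    have hbad := hAround z hzΔ
    rw [← hzP] at hbad
    exact absurd (hmax _ hkn hbad) (by omega)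
  have hCfalse_Qp : ∀ z ∈ Qp, σ z = false := hQpF
  have hCtrue_mem : ∀ z ∈ C, σ z = true → z ∈ Pp := by
    intro z hz ht
    rw [hCeq] at hz
    rcases List.mem_append.mp hz with h | h
    · exact h
    · rw [hCfalse_Qp z h] at ht
      exact absurd ht (by simp)
  by_cases hPpE : Pp = []
  · -- degenerate case : the circuit is a pure 0-circuit
    have hCQ : C = Qp := by rw [hCeq, hPpE, List.nil_append]
    have hCadj : C.Chain' adj := by rw [hCQ]; exact hQpChain
    have hallF : ∀ z ∈ C, σ z = false := by
      intro z hz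
      exact hCfalse_Qp z (by rwa [← hCQ])
    have hnotC : ∀ q : Site, σ q = true → q ∉ C := by
      intro q hσq hqC
      rw [hallF q hqC] at hσq
      exact absurd hσq (by simp)
    have huC : u ∉ C := hnotC u hσu
    have hvC : v ∉ C := hnotC v hσv
    obtain ⟨c1, hc1⟩ : ∃ q : Site, q = C.getLast hCne := ⟨_, rfl⟩
    obtain ⟨c2, hc2⟩ : ∃ q : Site, q = C.head hCne := ⟨_, rfl⟩
    have hc1C : c1 ∈ C := by rw [hc1]; exact List.getLast_mem hCne
    have hc2C : c2 ∈ C := by rw [hc2]; exact List.head_mem hCne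
    have hclosing : ∀ r : Site × Site, r ∈ (C ++ C.take 1).zip (C ++ C.take 1).tail →
        (r.2.1 - r.1.1 = 1 ∨ r.2.1 - r.1.1 = -1) → (r.2.2 - r.1.2 = 1 ∨ r.2.2 - r.1.2 = -1) →
        r.1 = c1 ∧ r.2 = c2 := by
      intro r hr hd1 hd2
      rcases pair_in_circuit hCne hr with ⟨i, hi, h1, h2⟩ | ⟨h1, h2⟩
      · exfalso
        have hadjr := chain'_rel hCadj hi
        rw [h1, h2] at hadjr
        have hsq1 : (r.1.1 - r.2.1) ^ 2 = 1 := by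
          rcases hd1 with h | h
          · rw [show r.1.1 - r.2.1 = -1 by omega]; ring
          · rw [show r.1.1 - r.2.1 = 1 by omega]; ring
        have hsq2 : (r.1.2 - r.2.2) ^ 2 = 1 := by
          rcases hd2 with h | h
          · rw [show r.1.2 - r.2.2 = -1 by omega]; ring
          · rw [show r.1.2 - r.2.2 = 1 by omega]; ring
        have := hadjr
        unfold adj at this
        omega
      · rw [← hc1, ← hc2] at *
        exact ⟨h1, h2⟩
    obtain ⟨p, hp, hp1C, hp2C, e1, e2, e3, e4, e5, e6⟩ :=
      step_cross C hCne hCchain hClose hadj_uw huC hw1C (hwdiff u w1 huC hu_nb hbad_w1)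
    obtain ⟨q, hq, hq1C, hq2C, f1, f2, f3, f4, f5, f6⟩ :=
      step_cross C hCne hCchain hClose (adjStar_symm hadj_wv) hvC hw2C
        (hwdiff v w2 hvC hv_nb hbad_w2)
    obtain ⟨hp1, hp2⟩ := hclosing p hp e5 e6
    obtain ⟨hq1, hq2⟩ := hclosing q hq f5 f6
    rw [hp1, hp2] at e1 e2 e5 e6
    rw [hq1, hq2] at f1 f2 f5 f6
    have d3 := hne2 w1 hw1C c1 hc1C
    have d4 := hne2 w1 hw1C c2 hc2C
    have d7 := hne2 w2 hw2C c1 hc1C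
    have d8 := hne2 w2 hw2C c2 hc2C
    have huv : u = v := by
      rcases pin_lemma u w1 v w2 c1 c2 e1 e2 e3 e4 e5 e6 f1 f2 f3 f4 d3 d4 d7 d8 with h | h
      · exact h
      · exfalso
        rw [h] at hbad_w1
        exact hv_nb hbad_w1
    obtain ⟨hj1, hj2, hj3, hj4⟩ := join_lists (P.take i0) (P.drop (j0 + 1)) u hXlast
      (by rw [hZhead, huv]) hXchain hZchain
    refine ⟨P.take i0 ++ (P.drop (j0 + 1)).tail, ⟨?_, hj1, ?_⟩, ?_, ?_, ?_⟩
    · exact ne_nil_of_head? (by rw [hj2, hXhead])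
    · intro z hz
      rcases hj4 z hz with h | h
      · exact (hXgood z h).1
      · exact (hZgood z h).1
    · rw [hj2, hXhead]
    · rw [hj3, hZlast]
    · intro z hz
      rcases hj4 z hz with h | h
      · exact (hXgood z h).2
      · exact (hZgood z h).2
  · -- main case : the 1-part is nonempty
    have hheadPp : C.head hCne ∈ Pp := by
      have h1 : C.head? = Pp.head? := by
        rw [hCeq, List.head?_append, List.head?_eq_head hPpE]
        simp
      have h2 := List.head?_eq_head hCne
      rw [h1, List.head?_eq_head hPpE] at h2
      rw [← Option.some_inj.mp h2]
      exact List.head_mem hPpE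
    have hlenC : C.length = Pp.length + Qp.length := by rw [hCeq, List.length_append]
    have hhook : ∀ q r : Site, q ∉ C → r ∉ C → ¬ circuitEncloses C q → circuitEncloses C r →
        adjStar q r → ∃ a ∈ Pp, adjStar q a := by
      intro q r hqC hrC hqnb hrb hqr
      obtain ⟨p, hp, hp1C, hp2C, e1, e2, e3, e4, e5, e6⟩ :=
        step_cross C hCne hCchain hClose hqr hqC hrC (hwdiff q r hqC hqnb hrb)
      have hq1 : q ≠ p.1 := fun h => hqC (h ▸ hp1C)
      have hq2 : q ≠ p.2 := fun h => hqC (h ▸ hp2C)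
      have hadjq1 : adjStar q p.1 := by
        refine ⟨hq1, ?_, ?_⟩ <;> rw [abs_le] <;> omega
      have hadjq2 : adjStar q p.2 := by
        refine ⟨hq2, ?_, ?_⟩ <;> rw [abs_le] <;> omega
      rcases pair_in_circuit hCne hp with ⟨i, hi, h1, h2⟩ | ⟨h1, h2⟩
      · by_cases hiPp : i < Pp.length
        · refine ⟨p.1, ?_, hadjq1⟩
          rw [← h1, List.getElem_of_eq hCeq, List.getElem_append_left hiPp]
          exact List.getElem_mem _
        · exfalso
          have hiQ : Pp.length ≤ i := by omega
          have hle1 : i - Pp.length + 1 < Qp.length := by omega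
          have hadjr : adj (Qp[i - Pp.length]'(by omega)) (Qp[i - Pp.length + 1]'hle1) :=
            chain'_rel hQpChain hle1
          have hg1 : C[i]'(by omega) = Qp[i - Pp.length]'(by omega) := by
            rw [List.getElem_of_eq hCeq, List.getElem_append_right hiQ]
          have hg2 : C[i + 1]'hi = Qp[i - Pp.length + 1]'hle1 := by
            rw [List.getElem_of_eq hCeq, List.getElem_append_right (by omega)]
            congr 1
            omega
          rw [← hg1, ← hg2, h1, h2] at hadjr
          have hsq1 : (p.1.1 - p.2.1) ^ 2 = 1 := by
            rcases e5 with h | h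
            · rw [show p.1.1 - p.2.1 = -1 by omega]; ring
            · rw [show p.1.1 - p.2.1 = 1 by omega]; ring
          have hsq2 : (p.1.2 - p.2.2) ^ 2 = 1 := by
            rcases e6 with h | h
            · rw [show p.1.2 - p.2.2 = -1 by omega]; ring
            · rw [show p.1.2 - p.2.2 = 1 by omega]; ring
          have := hadjr
          unfold adj at this
          omega
      · refine ⟨p.2, ?_, hadjq2⟩
        rw [h2]
        exact hheadPp
    have hu_hook : u ∈ Pp ∨ ∃ a ∈ Pp, adjStar u a := by
      by_cases huC : u ∈ C
      · exact Or.inl (hCtrue_mem u huC hσu)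
      · exact Or.inr (hhook u w1 huC hw1C hu_nb hbad_w1 hadj_uw)
    have hv_hook : v ∈ Pp ∨ ∃ a ∈ Pp, adjStar v a := by
      by_cases hvC : v ∈ C
      · exact Or.inl (hCtrue_mem v hvC hσv)
      · exact Or.inr (hhook v w2 hvC hw2C hv_nb hbad_w2 (adjStar_symm hadj_wv))
    obtain ⟨M, hMchain, hMh, hMl, hMm⟩ := conn_through Pp hPpChain u v hu_hook hv_hook
    obtain ⟨hj1, hj2, hj3, hj4⟩ := join_lists (P.take i0) M u hXlast hMh hXchain hMchain
    rw [hMl] at hj3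
    obtain ⟨hk1, hk2, hk3, hk4⟩ := join_lists (P.take i0 ++ M.tail) (P.drop (j0 + 1)) v hj3
      hZhead hj1 hZchain
    have hPpgood : ∀ z ∈ Pp, σ z = true ∧ z ∉ (↑Δ : Set Site) := by
      intro z hz
      refine ⟨hPpT z hz, ?_⟩
      intro hzΔ
      have hbad := hAround z hzΔ
      apply hbad.1
      rw [hCeq]
      exact List.mem_append.mpr (Or.inl hz)
    have hgood : ∀ z ∈ (P.take i0 ++ M.tail) ++ (P.drop (j0 + 1)).tail,
        σ z = true ∧ z ∉ (↑Δ : Set Site) := by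
      intro z hz
      rcases hk4 z hz with h | h
      · rcases hj4 z h with h' | h'
        · exact hXgood z h'
        · rcases hMm z h' with rfl | rfl | h''
          · refine ⟨hσu, ?_⟩
            intro hzΔ
            exact hu_nb (hAround _ hzΔ)
          · refine ⟨hσv, ?_⟩
            intro hzΔ
            exact hv_nb (hAround _ hzΔ)
          · exact hPpgood z h''
      · exact hZgood z h
    refine ⟨(P.take i0 ++ M.tail) ++ (P.drop (j0 + 1)).tail, ⟨?_, hk1, ?_⟩, ?_, ?_, ?_⟩
    · exact ne_nil_of_head? (by rw [hk2, hj2, hXhead])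
    · intro z hz
      exact (hgood z hz).1
    · rw [hk2, hj2, hXhead]
    · rw [hk3, hZlast]
    · intro z hz
      exact (hgood z hz).2

end Percolation
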